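/- Let the partial n×n matrix P (n ≥ 4) have all diagonal entries a, all entries at distance 1 from the diagonal equal to b, corner entries (1,n) and (n,1) equal to c, and all other entries unspecified. If P has a positive definite completion, then its unique maximum determinant completion is a Toeplitz matrix. -/

import Mathlib

open Matrix

namespace Stmt14Aux

lemma pd_symm {N : ℕ} {A : Matrix (Fin N) (Fin N) ℝ} (h : A.PosDef) (i j : Fin N) :
    A j i = A i j := by
  have := congrFun (congrFun h.1 i) j
  simpa using this

noncomputable def Epert {n : ℕ} (p q : Fin n) : Matrix (Fin n) (Fin n) ℝ :=
  Matrix.of fun k l => (if k = p then (1:ℝ) else 0) * (if l = q then 1 else 0)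
    + (if k = q then 1 else 0) * (if l = p then 1 else 0)

lemma Epert_quad {n : ℕ} (p q : Fin n) (x : Fin n → ℝ) :
    x ⬝ᵥ (Epert p q *ᵥ x) = 2 * (x p * x q) := by
  have hmv : ∀ k : Fin n, (Epert p q *ᵥ x) k
      = (if k = p then x q else 0) + (if k = q then x p else 0) := by
    intro k
    show (∑ l, ((if k = p then (1:ℝ) else 0) * (if l = q then 1 else 0)
      + (if k = q then 1 else 0) * (if l = p then 1 else 0)) * x l) = _
    rw [Finset.sum_congr rfl (fun l _ => by ring_nf :
      ∀ l ∈ Finset.univ, ((if k = p then (1:ℝ) else 0) * (if l = q then 1 else 0)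
        + (if k = q then 1 else 0) * (if l = p then 1 else 0)) * x l
      = (if k = p then (1:ℝ) else 0) * ((if l = q then 1 else 0) * x l)
        + (if k = q then 1 else 0) * ((if l = p then 1 else 0) * x l)),
      Finset.sum_add_distrib, ← Finset.mul_sum, ← Finset.mul_sum]
    have e1 : (∑ l, (if l = q then (1:ℝ) else 0) * x l) = x q := by
      simp [ite_mul, Finset.sum_ite_eq']
    have e2 : (∑ l, (if l = p then (1:ℝ) else 0) * x l) = x p := by
      simp [ite_mul, Finset.sum_ite_eq']
    rw [e1, e2]
    by_cases h1 : k = p <;> by_cases h2 : k = q <;> simp [h1, h2]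
  show (∑ k, x k * (Epert p q *ᵥ x) k) = _
  rw [Finset.sum_congr rfl (fun k _ => by rw [hmv k])]
  have e3 : (∑ k, x k * ((if k = p then x q else 0) + (if k = q then x p else 0)))
      = (∑ k, (if k = p then x k * x q else 0)) + (∑ k, (if k = q then x k * x p else 0)) := by
    rw [← Finset.sum_add_distrib]
    refine Finset.sum_congr rfl fun k _ => ?_
    rcases eq_or_ne p q with h3 | h3
    · subst h3
      by_cases h1 : k = p <;> simp [h1] <;> ring
    · by_cases h1 : k = p <;> by_cases h2 : k = q <;>
        simp [h1, h2, h3, Ne.symm h3] <;> ring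
  rw [e3, Finset.sum_ite_eq' Finset.univ p (fun k => x k * x q),
    Finset.sum_ite_eq' Finset.univ q (fun k => x k * x p)]
  simp
  ring

lemma Epert_symm {n : ℕ} (p q : Fin n) : (Epert p q).IsHermitian := by
  ext i j
  simp only [Epert, Matrix.conjTranspose_apply, Matrix.of_apply, star_trivial]
  ring

lemma perturb_posdef {n : ℕ} (hn : 0 < n) {A : Matrix (Fin n) (Fin n) ℝ} (hA : A.PosDef)
    (p q : Fin n) :
    ∃ ε > (0:ℝ), ∀ t : ℝ, |t| < ε → (A + t • Epert p q).PosDef := by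
  haveI : Nonempty (Fin n) := ⟨⟨0, hn⟩⟩
  have hcont : Continuous fun x : Fin n → ℝ => x ⬝ᵥ (A *ᵥ x) := by
    have : (fun x : Fin n → ℝ => x ⬝ᵥ (A *ᵥ x))
        = fun x => ∑ i, x i * ∑ j, A i j * x j := rfl
    rw [this]
    refine continuous_finset_sum _ fun i _ => (continuous_apply i).mul ?_
    exact continuous_finset_sum _ fun j _ => continuous_const.mul (continuous_apply j)
  have hne : (Metric.sphere (0 : Fin n → ℝ) 1).Nonempty :=
    NormedSpace.sphere_nonempty.mpr zero_le_one
  obtain ⟨x0, hx0S, hmin⟩ := (isCompact_sphere (0 : Fin n → ℝ) 1).exists_isMinOn hne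
    hcont.continuousOn
  have hx0norm : ‖x0‖ = 1 := by simpa using hx0S
  have hx0ne : x0 ≠ 0 := by
    intro hz
    rw [hz] at hx0norm
    simp at hx0norm
  set c := x0 ⬝ᵥ (A *ᵥ x0) with hc
  have hcpos : 0 < c := by
    have := hA.dotProduct_mulVec_pos hx0ne
    simpa using this
  refine ⟨c / 2, by positivity, fun t ht => ?_⟩
  refine Matrix.PosDef.of_dotProduct_mulVec_pos ?_ ?_
  · have h1 := hA.1.eq
    have h2 := (Epert_symm p q).eq
    simp only [Matrix.IsHermitian, Matrix.conjTranspose_add, Matrix.conjTranspose_smul,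
      star_trivial, h1, h2]
  · intro x hx
    have hxnorm : 0 < ‖x‖ := norm_pos_iff.mpr hx
    have hlow : c * ‖x‖^2 ≤ x ⬝ᵥ (A *ᵥ x) := by
      set u : Fin n → ℝ := ‖x‖⁻¹ • x with hu
      have hunorm : ‖u‖ = 1 := by
        rw [hu, norm_smul, norm_inv, norm_norm, inv_mul_cancel₀ hxnorm.ne']
      have humem : u ∈ Metric.sphere (0 : Fin n → ℝ) 1 := by
        simpa using hunorm
      have h3 : c ≤ u ⬝ᵥ (A *ᵥ u) := hmin humem
      have h4 : u ⬝ᵥ (A *ᵥ u) = ‖x‖⁻¹ * ‖x‖⁻¹ * (x ⬝ᵥ (A *ᵥ x)) := by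
        rw [hu, Matrix.mulVec_smul, smul_dotProduct, dotProduct_smul]
        simp [smul_eq_mul]
        ring
      rw [h4] at h3
      have h5 : c * ‖x‖^2 ≤ ‖x‖⁻¹ * ‖x‖⁻¹ * (x ⬝ᵥ (A *ᵥ x)) * ‖x‖^2 := by
        nlinarith [sq_nonneg ‖x‖]
      calc c * ‖x‖^2 ≤ ‖x‖⁻¹ * ‖x‖⁻¹ * (x ⬝ᵥ (A *ᵥ x)) * ‖x‖^2 := h5
        _ = (‖x‖⁻¹ * ‖x‖) * (‖x‖⁻¹ * ‖x‖) * (x ⬝ᵥ (A *ᵥ x)) := by ring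
        _ = x ⬝ᵥ (A *ᵥ x) := by rw [inv_mul_cancel₀ hxnorm.ne']; ring
    have hEb : |x ⬝ᵥ (Epert p q *ᵥ x)| ≤ 2 * ‖x‖^2 := by
      rw [Epert_quad]
      have h6 : |x p| ≤ ‖x‖ := by
        have := norm_le_pi_norm x p
        simpa using this
      have h7 : |x q| ≤ ‖x‖ := by
        have := norm_le_pi_norm x q
        simpa using this
      rw [abs_mul]
      have : |x p * x q| ≤ ‖x‖^2 := by
        rw [abs_mul, sq]
        exact mul_le_mul h6 h7 (abs_nonneg _) (norm_nonneg _)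
      rw [abs_two]
      nlinarith
    have hexp : x ⬝ᵥ ((A + t • Epert p q) *ᵥ x)
        = x ⬝ᵥ (A *ᵥ x) + t * (x ⬝ᵥ (Epert p q *ᵥ x)) := by
      rw [Matrix.add_mulVec, dotProduct_add, Matrix.smul_mulVec, dotProduct_smul,
        smul_eq_mul]
    have hstar : star x = x := by simp
    rw [hstar, hexp]
    have habs : |t * (x ⬝ᵥ (Epert p q *ᵥ x))| ≤ |t| * (2 * ‖x‖^2) := by
      rw [abs_mul]
      exact mul_le_mul_of_nonneg_left hEb (abs_nonneg t)
    have h8 : t * (x ⬝ᵥ (Epert p q *ᵥ x)) ≥ -(|t| * (2 * ‖x‖^2)) := by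
      have h9 := neg_abs_le (t * (x ⬝ᵥ (Epert p q *ᵥ x)))
      linarith
    have h10 : |t| * ‖x‖^2 < (c/2) * ‖x‖^2 :=
      mul_lt_mul_of_pos_right ht (by positivity)
    linarith

lemma Epert_zero {n : ℕ} (p q i j : Fin n) (h1 : ¬(i = p ∧ j = q)) (h2 : ¬(i = q ∧ j = p)) :
    Epert p q i j = 0 := by
  simp only [Epert, Matrix.of_apply]
  by_cases ha : i = p <;> by_cases hb : j = q <;> by_cases hc : i = q <;>
    by_cases hd : j = p <;> simp_all

lemma updateCol_comm' {n : ℕ} (M : Matrix (Fin n) (Fin n) ℝ) {p q : Fin n} (hpq : p ≠ q)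
    (f g : Fin n → ℝ) :
    (M.updateCol p f).updateCol q g = (M.updateCol q g).updateCol p f := by
  ext k l
  simp only [Matrix.updateCol_apply]
  by_cases h1 : l = q <;> by_cases h2 : l = p
  · exact absurd (h1.symm.trans h2) (Ne.symm hpq)
  · simp [h1, h2, Ne.symm hpq]
  · simp [h1, h2, hpq]
  · simp [h1, h2]

lemma det_perturb {n : ℕ} (A : Matrix (Fin n) (Fin n) ℝ) {p q : Fin n} (hpq : p ≠ q) (t : ℝ) :
    (A + t • Epert p q).det = A.det
      + t * ((A.updateCol q (Pi.single p 1)).det + (A.updateCol p (Pi.single q 1)).det)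
      + t^2 * ((A.updateCol p (Pi.single q 1)).updateCol q (Pi.single p 1)).det := by
  set U := A.updateCol q ((fun k => A k q) + t • (Pi.single p 1 : Fin n → ℝ)) with hU
  have hrepr : A + t • Epert p q
      = U.updateCol p ((fun k => A k p) + t • (Pi.single q 1 : Fin n → ℝ)) := by
    ext k l
    simp only [hU, Matrix.updateCol_apply, Matrix.add_apply, Matrix.smul_apply, Epert,
      Matrix.of_apply, Pi.add_apply, Pi.smul_apply, Pi.single_apply, smul_eq_mul]
    by_cases h1 : l = p <;> by_cases h2 : l = q
    · exact absurd (h1.symm.trans h2) hpq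
    · by_cases h3 : k = q <;> by_cases h4 : k = p <;>
        simp [h1, h2, h3, h4, hpq, Ne.symm hpq] <;> ring
    · by_cases h3 : k = q <;> by_cases h4 : k = p <;>
        simp [h1, h2, h3, h4, hpq, Ne.symm hpq] <;> ring
    · by_cases h3 : k = q <;> by_cases h4 : k = p <;>
        simp [h1, h2, h3, h4, hpq, Ne.symm hpq] <;> ring
  rw [hrepr, Matrix.det_updateCol_add, Matrix.det_updateCol_smul]
  have hUp : U.updateCol p (fun k => A k p) = U := by
    have he : (fun k => A k p) = fun k => U k p := by
      funext k
      simp [hU, Matrix.updateCol_apply, hpq]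
    rw [he]
    exact Matrix.updateCol_eq_self U p
  rw [hUp]
  have hUdet : U.det = A.det + t * (A.updateCol q (Pi.single p 1)).det := by
    rw [hU, Matrix.det_updateCol_add, Matrix.det_updateCol_smul,
      Matrix.updateCol_eq_self]
  have hUq : (U.updateCol p (Pi.single q 1)).det
      = (A.updateCol p (Pi.single q 1)).det
        + t * ((A.updateCol p (Pi.single q 1)).updateCol q (Pi.single p 1)).det := by
    rw [hU, updateCol_comm' _ (Ne.symm hpq), Matrix.det_updateCol_add,
      Matrix.det_updateCol_smul]
    congr 2
    have he : ((fun k => A k q)) = fun k => (A.updateCol p (Pi.single q 1)) k q := by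
      funext k
      simp [Matrix.updateCol_apply, Ne.symm hpq]
    rw [he, Matrix.updateCol_eq_self]
  rw [hUdet, hUq]
  ring

lemma det_updateCol_single {n : ℕ} (A : Matrix (Fin n) (Fin n) ℝ) (hAT : Aᵀ = A)
    (p q : Fin n) :
    (A.updateCol q (Pi.single p 1)).det = A.adjugate p q := by
  rw [Matrix.adjugate_apply]
  rw [← Matrix.det_transpose, ← Matrix.updateRow_transpose, hAT]


lemma stationarity {n : ℕ} (hn : 0 < n) {A : Matrix (Fin n) (Fin n) ℝ} (hApd : A.PosDef)
    {p q : Fin n} (hpq : p ≠ q)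
    (hmax : ∀ t : ℝ, (A + t • Epert p q).PosDef → (A + t • Epert p q).det ≤ A.det) :
    A⁻¹ p q = 0 := by
  obtain ⟨ε, hε, hPD⟩ := perturb_posdef hn hApd p q
  set L := (A.updateCol q (Pi.single p 1)).det + (A.updateCol p (Pi.single q 1)).det
    with hLdef
  set G := ((A.updateCol p (Pi.single q 1)).updateCol q (Pi.single p 1)).det with hGdef
  have hineq : ∀ t : ℝ, |t| < ε → t * L + t^2 * G ≤ 0 := by
    intro t ht
    have h1 := hmax t (hPD t ht)
    rw [det_perturb A hpq t, ← hLdef, ← hGdef] at h1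
    linarith
  have hL : L = 0 := by
    by_contra hL0
    have hLpos : 0 < |L| := abs_pos.mpr hL0
    have h2 : 0 < |L| / (2 * (|G| + 1)) := div_pos hLpos (by positivity)
    set s := min (ε/2) (|L| / (2 * (|G| + 1))) with hs
    have hspos : 0 < s := lt_min (by linarith) h2
    set t := if 0 < L then s else -s with htdef
    have habs : |t| = s := by
      by_cases h : 0 < L <;> simp [htdef, h, abs_of_pos hspos]
    have htL : t * L = s * |L| := by
      rcases lt_trichotomy L 0 with h | h | h
      · rw [htdef, if_neg (by linarith), abs_of_neg h]; ring
      · exact absurd h hL0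
      · rw [htdef, if_pos h, abs_of_pos h]
    have hq := hineq t (by rw [habs]; exact lt_of_le_of_lt (min_le_left _ _) (by linarith))
    have ht2 : t^2 = s^2 := by
      by_cases h : 0 < L <;> simp [htdef, h] <;> ring
    have hG1 : -(s^2 * |G|) ≤ t^2 * G := by
      rw [ht2]
      nlinarith [neg_abs_le G, sq_nonneg s]
    have hs2 : s ≤ |L| / (2 * (|G| + 1)) := min_le_right _ _
    have hkey : s^2 * |G| ≤ s * (|L| / (2 * (|G| + 1))) * (|G| + 1) := by
      have h0G := abs_nonneg G
      have hss : s * s ≤ s * (|L| / (2 * (|G| + 1))) :=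
        mul_le_mul_of_nonneg_left hs2 hspos.le
      have hss2 : s * s * (|G| + 1) ≤ s * (|L| / (2 * (|G| + 1))) * (|G| + 1) :=
        mul_le_mul_of_nonneg_right hss (by positivity)
      nlinarith [sq_nonneg s]
    have hhalf : s * (|L| / (2 * (|G| + 1))) * (|G| + 1) = s * |L| / 2 := by
      field_simp
    have hpos : 0 < s * |L| := by positivity
    linarith [hq, htL, hG1, hkey, hhalf, hpos]
  -- conclude the inverse entry vanishes
  have hAT : Aᵀ = A := by
    ext i j
    rw [Matrix.transpose_apply]
    exact pd_symm hApd i j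
  have hadj : A.adjugate p q = 0 := by
    have e1 := det_updateCol_single A hAT p q
    have e2 := det_updateCol_single A hAT q p
    have hadjsym : A.adjugate q p = A.adjugate p q := by
      have h3 := Matrix.adjugate_transpose A
      rw [hAT] at h3
      have := congrFun (congrFun h3 p) q
      simpa [Matrix.transpose_apply] using this
    rw [hLdef, e1, e2, hadjsym] at hL
    linarith
  rw [Matrix.inv_def, Matrix.smul_apply, hadj, smul_eq_mul, mul_zero]

lemma sum2 {n : ℕ} (f : Fin n → ℝ) {k1 k2 : Fin n} (h12 : k1 ≠ k2)
    (h0 : ∀ k, k ≠ k1 → k ≠ k2 → f k = 0) :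
    ∑ k, f k = f k1 + f k2 := by
  have h : ∑ k, f k = ∑ k ∈ ({k1, k2} : Finset (Fin n)), f k := by
    refine (Finset.sum_subset (Finset.subset_univ _) ?_).symm
    intro k _ hk
    simp only [Finset.mem_insert, Finset.mem_singleton, not_or] at hk
    exact h0 k hk.1 hk.2
  rw [h, Finset.sum_insert (by simp [h12]), Finset.sum_singleton]

lemma sum3 {n : ℕ} (f : Fin n → ℝ) {k1 k2 k3 : Fin n} (h12 : k1 ≠ k2) (h13 : k1 ≠ k3)
    (h23 : k2 ≠ k3) (h0 : ∀ k, k ≠ k1 → k ≠ k2 → k ≠ k3 → f k = 0) :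
    ∑ k, f k = f k1 + f k2 + f k3 := by
  have h : ∑ k, f k = ∑ k ∈ ({k1, k2, k3} : Finset (Fin n)), f k := by
    refine (Finset.sum_subset (Finset.subset_univ _) ?_).symm
    intro k _ hk
    simp only [Finset.mem_insert, Finset.mem_singleton, not_or] at hk
    exact h0 k hk.1 hk.2.1 hk.2.2
  rw [h, Finset.sum_insert (by simp [h12, h13]), Finset.sum_insert (by simp [h23]),
    Finset.sum_singleton, add_assoc]

lemma diag_pos {n : ℕ} {A : Matrix (Fin n) (Fin n) ℝ} (hA : A.PosDef) (i : Fin n) :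
    0 < A i i := by
  have h := hA.dotProduct_mulVec_pos (x := Pi.single i 1) (by
    intro hx
    have := congrFun hx i
    simp at this)
  simpa [dotProduct, Pi.single_apply] using h

lemma quad_pair {n : ℕ} {A : Matrix (Fin n) (Fin n) ℝ} (hA : A.PosDef) {i j : Fin n}
    (hij : i ≠ j) : 0 < A i i - A i j - A j i + A j j := by
  have h := hA.dotProduct_mulVec_pos (x := Pi.single i 1 - Pi.single j 1) (by
    intro hx
    have := congrFun hx i
    simp [Pi.single_apply, hij] at this)
  have e : (Pi.single i 1 - Pi.single j 1 : Fin n → ℝ) ⬝ᵥ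
      (A *ᵥ (Pi.single i 1 - Pi.single j 1)) = A i i - A i j - A j i + A j j := by
    simp [mulVec_sub, dotProduct_sub, sub_dotProduct]
    ring
  rw [show star (Pi.single i 1 - Pi.single j 1 : Fin n → ℝ)
      = Pi.single i 1 - Pi.single j 1 from by simp, e] at h
  exact h

lemma posDef_sub_castSucc {n : ℕ} {A : Matrix (Fin (n+1)) (Fin (n+1)) ℝ} (hA : A.PosDef) :
    (A.submatrix Fin.castSucc Fin.castSucc).PosDef := by
  refine Matrix.PosDef.of_dotProduct_mulVec_pos (hA.1.submatrix _) fun x hx => ?_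
  set y : Fin (n+1) → ℝ := Fin.snoc x 0 with hy
  have hyne : y ≠ 0 := by
    intro h
    apply hx
    funext i
    have := congrFun h (Fin.castSucc i)
    simpa [hy] using this
  have hquad := hA.dotProduct_mulVec_pos hyne
  have e1 : ∀ k : Fin n, (A *ᵥ y) (Fin.castSucc k)
      = ((A.submatrix Fin.castSucc Fin.castSucc) *ᵥ x) k := by
    intro k
    simp [mulVec, dotProduct, Fin.sum_univ_castSucc, hy]
  have e2 : star y ⬝ᵥ (A *ᵥ y) = star x ⬝ᵥ ((A.submatrix Fin.castSucc Fin.castSucc) *ᵥ x) := by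
    rw [show star y = y from by simp, show star x = x from by simp]
    rw [dotProduct, Fin.sum_univ_castSucc]
    simp only [hy, Fin.snoc_last, zero_mul, add_zero, Fin.snoc_castSucc]
    rw [dotProduct]
    exact Finset.sum_congr rfl fun k _ => by rw [e1]
  rw [← e2]; exact hquad

lemma posDef_sub_succ {n : ℕ} {A : Matrix (Fin (n+1)) (Fin (n+1)) ℝ} (hA : A.PosDef) :
    (A.submatrix Fin.succ Fin.succ).PosDef := by
  refine Matrix.PosDef.of_dotProduct_mulVec_pos (hA.1.submatrix _) fun x hx => ?_
  set y : Fin (n+1) → ℝ := Fin.cons 0 x with hy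
  have hyne : y ≠ 0 := by
    intro h
    apply hx
    funext i
    have := congrFun h (Fin.succ i)
    simpa [hy] using this
  have hquad := hA.dotProduct_mulVec_pos hyne
  have e1 : ∀ k : Fin n, (A *ᵥ y) (Fin.succ k)
      = ((A.submatrix Fin.succ Fin.succ) *ᵥ x) k := by
    intro k
    simp [mulVec, dotProduct, Fin.sum_univ_succ, hy]
  have e2 : star y ⬝ᵥ (A *ᵥ y) = star x ⬝ᵥ ((A.submatrix Fin.succ Fin.succ) *ᵥ x) := by
    rw [show star y = y from by simp, show star x = x from by simp]
    rw [dotProduct, Fin.sum_univ_succ]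
    simp only [hy, Fin.cons_zero, zero_mul, zero_add, Fin.cons_succ]
    rw [dotProduct]
    exact Finset.sum_congr rfl fun k _ => by rw [e1]
  rw [← e2]; exact hquad

lemma schur {n : ℕ} {A B : Matrix (Fin (n+1)) (Fin (n+1)) ℝ} (hBA : B * A = 1) (hAB : A * B = 1)
    (f : Fin n → Fin (n+1)) (v : Fin (n+1)) (hfinj : Function.Injective f)
    (hfv : ∀ k, f k ≠ v)
    (hsplit : ∀ g : Fin (n+1) → ℝ, ∑ k, g k = (∑ k : Fin n, g (f k)) + g v)
    (hd : B v v ≠ 0) :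
    ((Matrix.of fun i j => B (f i) (f j) - B (f i) v * B v (f j) / B v v)
        * (A.submatrix f f) = 1) ∧
    ((A.submatrix f f)
        * (Matrix.of fun i j => B (f i) (f j) - B (f i) v * B v (f j) / B v v) = 1) := by
  have hBA' : ∀ p q, ∑ k : Fin n, B p (f k) * A (f k) q
      = (1 : Matrix (Fin (n+1)) (Fin (n+1)) ℝ) p q - B p v * A v q := by
    intro p q
    have h : (B * A) p q = ∑ k, B p k * A k q := Matrix.mul_apply
    rw [hBA, hsplit (fun k => B p k * A k q)] at h
    linarith
  have hAB' : ∀ p q, ∑ k : Fin n, A p (f k) * B (f k) q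
      = (1 : Matrix (Fin (n+1)) (Fin (n+1)) ℝ) p q - A p v * B v q := by
    intro p q
    have h : (A * B) p q = ∑ k, A p k * B k q := Matrix.mul_apply
    rw [hAB, hsplit (fun k => A p k * B k q)] at h
    linarith
  have hone : ∀ i j : Fin n, (1 : Matrix (Fin (n+1)) (Fin (n+1)) ℝ) (f i) (f j)
      = (1 : Matrix (Fin n) (Fin n) ℝ) i j := by
    intro i j
    simp [Matrix.one_apply, hfinj.eq_iff]
  constructor
  · ext i j
    rw [Matrix.mul_apply]
    have expand : ∑ k, (Matrix.of fun i j => B (f i) (f j) - B (f i) v * B v (f j) / B v v) i k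
          * (A.submatrix f f) k j
        = (∑ k, B (f i) (f k) * A (f k) (f j))
          - (B (f i) v / B v v) * ∑ k, B v (f k) * A (f k) (f j) := by
      rw [Finset.mul_sum, ← Finset.sum_sub_distrib]
      refine Finset.sum_congr rfl fun k _ => ?_
      simp only [Matrix.of_apply, submatrix_apply]
      ring
    rw [expand, hBA', hBA']
    have h0 : (1 : Matrix (Fin (n+1)) (Fin (n+1)) ℝ) v (f j) = 0 := by
      simp [Matrix.one_apply, (hfv j).symm]
    rw [h0, hone]
    field_simp
    ring
  · ext i j
    rw [Matrix.mul_apply]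
    have expand : ∑ k, (A.submatrix f f) i k
          * (Matrix.of fun i j => B (f i) (f j) - B (f i) v * B v (f j) / B v v) k j
        = (∑ k, A (f i) (f k) * B (f k) (f j))
          - (B v (f j) / B v v) * ∑ k, A (f i) (f k) * B (f k) v := by
      rw [Finset.mul_sum, ← Finset.sum_sub_distrib]
      refine Finset.sum_congr rfl fun k _ => ?_
      simp only [Matrix.of_apply, submatrix_apply]
      ring
    rw [expand, hAB', hAB']
    have h0 : (1 : Matrix (Fin (n+1)) (Fin (n+1)) ℝ) (f i) v = 0 := by
      simp [Matrix.one_apply, hfv i]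
    rw [h0, hone]
    field_simp
    ring



lemma key : ∀ N : ℕ, 3 ≤ N → ∀ (a b : ℝ) (A B : Matrix (Fin N) (Fin N) ℝ),
    A.PosDef → B.PosDef → A * B = 1 → B * A = 1 →
    (∀ i, A i i = a) → (∀ i j : Fin N, (i:ℕ)+1 = (j:ℕ) → A i j = b) →
    (∀ i j : Fin N, ((i:ℕ)+1 < (j:ℕ) ∨ (j:ℕ)+1 < (i:ℕ)) →
      ¬((i:ℕ) = 0 ∧ (j:ℕ) = N-1) → ¬((j:ℕ) = 0 ∧ (i:ℕ) = N-1) → B i j = 0) →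
    ∀ i j i' j' : Fin N, (i : ℤ) - (j : ℤ) = (i' : ℤ) - (j' : ℤ) → A i j = A i' j' := by
  intro N hN
  induction N, hN using Nat.le_induction with
  | base =>
    intro a b A B hApd hBpd hAB hBA hdiag hsup hsupp i j i' j' h
    have hsym := pd_symm hApd
    obtain ⟨p, hp⟩ := i; obtain ⟨q, hq⟩ := j
    obtain ⟨p', hp'⟩ := i'; obtain ⟨q', hq'⟩ := j'
    have h' : (p:ℤ) - (q:ℤ) = (p':ℤ) - (q':ℤ) := h
    clear h
    have hcase : (p = q ∧ p' = q') ∨ (p = q+1 ∧ p' = q'+1) ∨ (q = p+1 ∧ q' = p'+1)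
        ∨ (p = p' ∧ q = q') := by omega
    rcases hcase with ⟨h1, h2⟩ | ⟨h1, h2⟩ | ⟨h1, h2⟩ | ⟨h1, h2⟩
    · rw [show (⟨q, hq⟩ : Fin 3) = ⟨p, hp⟩ from Fin.ext (show q = p by omega),
        show (⟨q', hq'⟩ : Fin 3) = ⟨p', hp'⟩ from Fin.ext (show q' = p' by omega), hdiag, hdiag]
    · rw [hsym, hsym ⟨q', hq'⟩, hsup _ _ (show q + 1 = p by omega),
        hsup _ _ (show q' + 1 = p' by omega)]
    · rw [hsup _ _ (show p + 1 = q by omega), hsup _ _ (show p' + 1 = q' by omega)]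
    · rw [show (⟨p, hp⟩ : Fin 3) = ⟨p', hp'⟩ from Fin.ext (show p = p' by omega),
        show (⟨q, hq⟩ : Fin 3) = ⟨q', hq'⟩ from Fin.ext (show q = q' by omega)]
  | succ n hn IH =>
    intro a b A B hApd hBpd hAB hBA hdiag hsup hsupp
    obtain ⟨m, rfl⟩ : ∃ m, n = m + 3 := ⟨n - 3, by omega⟩
    have hsym := pd_symm hApd
    have hBsym := pd_symm hBpd
    have hsupp' : ∀ (x y : ℕ) (hx : x < m + 4) (hy : y < m + 4),
        (x + 1 < y ∨ y + 1 < x) → ¬(x = 0 ∧ y = m + 3) → ¬(y = 0 ∧ x = m + 3) →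
        B ⟨x, hx⟩ ⟨y, hy⟩ = 0 :=
      fun x y hx hy h1 h2 h3 => hsupp ⟨x, hx⟩ ⟨y, hy⟩ h1 h2 h3
    have hsup' : ∀ (x y : ℕ) (hx : x < m + 4) (hy : y < m + 4), x + 1 = y →
        A ⟨x, hx⟩ ⟨y, hy⟩ = b := fun x y hx hy h => hsup _ _ h
    have hdiag' : ∀ (x : ℕ) (hx hx' : x < m + 4), A ⟨x, hx⟩ ⟨x, hx'⟩ = a :=
      fun x hx _ => hdiag ⟨x, hx⟩
    have hsymv : ∀ (x y : ℕ) (hx : x < m + 4) (hy : y < m + 4),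
        A ⟨x, hx⟩ ⟨y, hy⟩ = A ⟨y, hy⟩ ⟨x, hx⟩ := fun x y hx hy => hsym ⟨y, hy⟩ ⟨x, hx⟩
    have hBsymv : ∀ (x y : ℕ) (hx : x < m + 4) (hy : y < m + 4),
        B ⟨x, hx⟩ ⟨y, hy⟩ = B ⟨y, hy⟩ ⟨x, hx⟩ := fun x y hx hy => hBsym ⟨y, hy⟩ ⟨x, hx⟩
    have one_val : ∀ (x y : ℕ) (hx : x < m + 4) (hy : y < m + 4),
        (1 : Matrix (Fin (m+4)) (Fin (m+4)) ℝ) ⟨x, hx⟩ ⟨y, hy⟩ = if x = y then 1 else 0 := by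
      intro x y hx hy
      rw [Matrix.one_apply]
      by_cases h : x = y
      · rw [if_pos (Fin.ext h), if_pos h]
      · rw [if_neg (fun hh => h (congrArg Fin.val hh)), if_neg h]
    -- row expansions
    have row0 : ∀ j : Fin (m+4), (1 : Matrix (Fin (m+4)) (Fin (m+4)) ℝ) ⟨0, by omega⟩ j
        = B ⟨0, by omega⟩ ⟨0, by omega⟩ * A ⟨0, by omega⟩ j
          + B ⟨0, by omega⟩ ⟨1, by omega⟩ * A ⟨1, by omega⟩ j
          + B ⟨0, by omega⟩ ⟨m+3, by omega⟩ * A ⟨m+3, by omega⟩ j := by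
      intro j
      rw [← hBA, Matrix.mul_apply]
      refine sum3 (fun k => B ⟨0, by omega⟩ k * A k j) (k1 := ⟨0, by omega⟩)
        (k2 := ⟨1, by omega⟩) (k3 := ⟨m+3, by omega⟩)
        (Fin.ne_of_val_ne (show (0:ℕ) ≠ 1 by omega))
        (Fin.ne_of_val_ne (show (0:ℕ) ≠ m+3 by omega))
        (Fin.ne_of_val_ne (show (1:ℕ) ≠ m+3 by omega)) ?_
      intro k hk1 hk2 hk3
      have v1 : (k:ℕ) ≠ 0 := fun hh => hk1 (Fin.ext hh)
      have v2 : (k:ℕ) ≠ 1 := fun hh => hk2 (Fin.ext hh)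
      have v3 : (k:ℕ) ≠ m+3 := fun hh => hk3 (Fin.ext hh)
      have hk := k.isLt
      have hz := hsupp' 0 k (by omega) k.isLt (by omega) (by omega) (by omega)
      rw [show (⟨(k:ℕ), k.isLt⟩ : Fin (m+4)) = k from Fin.ext rfl] at hz
      simp only [hz, zero_mul]
    have rowN : ∀ j : Fin (m+4), (1 : Matrix (Fin (m+4)) (Fin (m+4)) ℝ) ⟨m+3, by omega⟩ j
        = B ⟨m+3, by omega⟩ ⟨0, by omega⟩ * A ⟨0, by omega⟩ j
          + B ⟨m+3, by omega⟩ ⟨m+2, by omega⟩ * A ⟨m+2, by omega⟩ j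
          + B ⟨m+3, by omega⟩ ⟨m+3, by omega⟩ * A ⟨m+3, by omega⟩ j := by
      intro j
      rw [← hBA, Matrix.mul_apply]
      refine sum3 (fun k => B ⟨m+3, by omega⟩ k * A k j) (k1 := ⟨0, by omega⟩)
        (k2 := ⟨m+2, by omega⟩) (k3 := ⟨m+3, by omega⟩)
        (Fin.ne_of_val_ne (show (0:ℕ) ≠ m+2 by omega))
        (Fin.ne_of_val_ne (show (0:ℕ) ≠ m+3 by omega))
        (Fin.ne_of_val_ne (show (m+2:ℕ) ≠ m+3 by omega)) ?_
      intro k hk1 hk2 hk3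
      have v1 : (k:ℕ) ≠ 0 := fun hh => hk1 (Fin.ext hh)
      have v2 : (k:ℕ) ≠ m+2 := fun hh => hk2 (Fin.ext hh)
      have v3 : (k:ℕ) ≠ m+3 := fun hh => hk3 (Fin.ext hh)
      have hk := k.isLt
      have hz := hsupp' (m+3) k (by omega) k.isLt (by omega) (by omega) (by omega)
      rw [show (⟨(k:ℕ), k.isLt⟩ : Fin (m+4)) = k from Fin.ext rfl] at hz
      simp only [hz, zero_mul]
    have row_int : ∀ (t : ℕ) (ht : t + 2 ≤ m + 3) (j : Fin (m+4)),
        (1 : Matrix (Fin (m+4)) (Fin (m+4)) ℝ) ⟨t+1, by omega⟩ j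
        = B ⟨t+1, by omega⟩ ⟨t, by omega⟩ * A ⟨t, by omega⟩ j
          + B ⟨t+1, by omega⟩ ⟨t+1, by omega⟩ * A ⟨t+1, by omega⟩ j
          + B ⟨t+1, by omega⟩ ⟨t+2, by omega⟩ * A ⟨t+2, by omega⟩ j := by
      intro t ht j
      rw [← hBA, Matrix.mul_apply]
      refine sum3 (fun k => B ⟨t+1, by omega⟩ k * A k j) (k1 := ⟨t, by omega⟩)
        (k2 := ⟨t+1, by omega⟩) (k3 := ⟨t+2, by omega⟩)
        (Fin.ne_of_val_ne (show (t:ℕ) ≠ t+1 by omega))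
        (Fin.ne_of_val_ne (show (t:ℕ) ≠ t+2 by omega))
        (Fin.ne_of_val_ne (show (t+1:ℕ) ≠ t+2 by omega)) ?_
      intro k hk1 hk2 hk3
      have v1 : (k:ℕ) ≠ t := fun hh => hk1 (Fin.ext hh)
      have v2 : (k:ℕ) ≠ t+1 := fun hh => hk2 (Fin.ext hh)
      have v3 : (k:ℕ) ≠ t+2 := fun hh => hk3 (Fin.ext hh)
      have hk := k.isLt
      have hz := hsupp' (t+1) k (by omega) k.isLt (by omega) (by omega) (by omega)
      rw [show (⟨(k:ℕ), k.isLt⟩ : Fin (m+4)) = k from Fin.ext rfl] at hz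
      simp only [hz, zero_mul]
    -- the off-diagonal entries of B next to the diagonal are all equal
    have estep : ∀ (t : ℕ) (ht : t + 2 ≤ m + 3),
        B ⟨t, by omega⟩ ⟨t+1, by omega⟩ = B ⟨t+1, by omega⟩ ⟨t+2, by omega⟩ := by
      intro t ht
      have R2 := row_int t ht ⟨t+2, by omega⟩
      have R3 := row_int t ht ⟨t, by omega⟩
      rw [one_val, if_neg (by omega), hsup' (t+1) (t+2) (by omega) (by omega) rfl,
        hdiag' (t+2) (by omega) (by omega)] at R2
      rw [one_val, if_neg (by omega), hdiag' t (by omega) (by omega),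
        hsymv (t+1) t (by omega) (by omega), hsup' t (t+1) (by omega) (by omega) rfl,
        hsymv (t+2) t (by omega) (by omega)] at R3
      have hq := quad_pair hApd (i := (⟨t, by omega⟩ : Fin (m+4))) (j := ⟨t+2, by omega⟩)
        (Fin.ne_of_val_ne (show (t:ℕ) ≠ t+2 by omega))
      rw [hdiag' t (by omega) (by omega), hdiag' (t+2) (by omega) (by omega),
        hsymv (t+2) t (by omega) (by omega)] at hq
      have hxa : A ⟨t, by omega⟩ ⟨t+2, by omega⟩ ≠ a := by
        intro hh
        rw [hh] at hq
        linarith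
      have hfac : (B ⟨t+1, by omega⟩ ⟨t, by omega⟩ - B ⟨t+1, by omega⟩ ⟨t+2, by omega⟩)
          * (A ⟨t, by omega⟩ ⟨t+2, by omega⟩ - a) = 0 := by linear_combination R3 - R2
      rcases mul_eq_zero.mp hfac with hz | hz
      · rw [hBsymv t (t+1) (by omega) (by omega)]
        linarith
      · exact absurd (by linarith : A ⟨t, by omega⟩ ⟨t+2, by omega⟩ = a) hxa
    have echain : ∀ (t : ℕ) (ht : t + 1 ≤ m + 3),
        B ⟨0, by omega⟩ ⟨1, by omega⟩ = B ⟨t, by omega⟩ ⟨t+1, by omega⟩ := by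
      intro t
      induction t with
      | zero => intro _; rfl
      | succ k ihk => intro hk; rw [ihk (by omega)]; exact estep k (by omega)
    have a_pos : 0 < a := by
      have h0 := diag_pos hApd ⟨0, by omega⟩
      rwa [hdiag] at h0
    -- d_0 = d_{N-1}
    have deq : B ⟨0, by omega⟩ ⟨0, by omega⟩ = B ⟨m+3, by omega⟩ ⟨m+3, by omega⟩ := by
      have E1 := row0 ⟨0, by omega⟩
      have E2 := rowN ⟨m+3, by omega⟩
      rw [one_val, if_pos rfl, hdiag' 0 (by omega) (by omega),
        hsymv 1 0 (by omega) (by omega), hsup' 0 1 (by omega) (by omega) rfl] at E1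
      rw [one_val, if_pos rfl, hdiag' (m+3) (by omega) (by omega),
        hsup' (m+2) (m+3) (by omega) (by omega) rfl,
        hBsymv (m+3) 0 (by omega) (by omega),
        hBsymv (m+3) (m+2) (by omega) (by omega),
        ← echain (m+2) (by omega),
        hsymv 0 (m+3) (by omega) (by omega)] at E2
      have hmul : B ⟨0, by omega⟩ ⟨0, by omega⟩ * a
          = B ⟨m+3, by omega⟩ ⟨m+3, by omega⟩ * a := by linarith
      exact mul_right_cancel₀ a_pos.ne' hmul
    -- the key corner equality  A ⟨m+3⟩ ⟨1⟩ = A ⟨0⟩ ⟨m+2⟩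
    have huw : A ⟨m+3, by omega⟩ ⟨1, by omega⟩ = A ⟨0, by omega⟩ ⟨m+2, by omega⟩ := by
      have E3 := rowN ⟨1, by omega⟩
      have E4 := row0 ⟨m+2, by omega⟩
      rw [one_val, if_neg (by omega), hsup' 0 1 (by omega) (by omega) rfl,
        hBsymv (m+3) 0 (by omega) (by omega),
        hBsymv (m+3) (m+2) (by omega) (by omega),
        ← echain (m+2) (by omega),
        hsymv (m+2) 1 (by omega) (by omega)] at E3
      rw [one_val, if_neg (by omega),
        hsymv (m+3) (m+2) (by omega) (by omega),
        hsup' (m+2) (m+3) (by omega) (by omega) rfl, deq] at E4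
      have hB0 : 0 < B ⟨m+3, by omega⟩ ⟨m+3, by omega⟩ := diag_pos hBpd _
      have hmul : B ⟨m+3, by omega⟩ ⟨m+3, by omega⟩ * A ⟨m+3, by omega⟩ ⟨1, by omega⟩
          = B ⟨m+3, by omega⟩ ⟨m+3, by omega⟩ * A ⟨0, by omega⟩ ⟨m+2, by omega⟩ := by
        linarith
      exact mul_left_cancel₀ hB0.ne' hmul
    -- submatrix A0 (indices 0..m+2)
    have hdlast : B (Fin.last (m+3)) (Fin.last (m+3)) ≠ 0 := (diag_pos hBpd _).ne'
    have s0 := schur hBA hAB Fin.castSucc (Fin.last (m+3)) (Fin.castSucc_injective _)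
      (fun k => (Fin.castSucc_lt_last k).ne) (fun g => Fin.sum_univ_castSucc g) hdlast
    have hA0pd := posDef_sub_castSucc hApd
    have hC0pd : (Matrix.of fun i j : Fin (m+3) => B i.castSucc j.castSucc -
        B i.castSucc (Fin.last (m+3)) * B (Fin.last (m+3)) j.castSucc
          / B (Fin.last (m+3)) (Fin.last (m+3))).PosDef := by
      have h1 : (A.submatrix Fin.castSucc Fin.castSucc)⁻¹
          = Matrix.of fun i j : Fin (m+3) => B i.castSucc j.castSucc -
            B i.castSucc (Fin.last (m+3)) * B (Fin.last (m+3)) j.castSucc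
              / B (Fin.last (m+3)) (Fin.last (m+3)) := Matrix.inv_eq_left_inv s0.1
      rw [← h1]
      exact hA0pd.inv
    have hC0supp : ∀ i j : Fin (m+3), ((i:ℕ)+1 < (j:ℕ) ∨ (j:ℕ)+1 < (i:ℕ)) →
        ¬((i:ℕ) = 0 ∧ (j:ℕ) = m+3-1) → ¬((j:ℕ) = 0 ∧ (i:ℕ) = m+3-1) →
        (Matrix.of fun i j : Fin (m+3) => B i.castSucc j.castSucc -
          B i.castSucc (Fin.last (m+3)) * B (Fin.last (m+3)) j.castSucc
            / B (Fin.last (m+3)) (Fin.last (m+3))) i j = 0 := by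
      intro i j hdist hc1 hc2
      have hi := i.isLt
      have hj := j.isLt
      have hc1' : ¬((i:ℕ) = 0 ∧ (j:ℕ) = m+2) := hc1
      have hc2' : ¬((j:ℕ) = 0 ∧ (i:ℕ) = m+2) := hc2
      have hfst : B i.castSucc j.castSucc = 0 :=
        hsupp' i j (by omega) (by omega) (by omega) (by omega) (by omega)
      by_cases h0 : (i:ℕ) = 0 ∨ (i:ℕ) = m+2
      · have hjn : ¬((j:ℕ) = 0 ∨ (j:ℕ) = m+2) := by omega
        have hsnd : B (Fin.last (m+3)) j.castSucc = 0 :=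
          hsupp' (m+3) j (by omega) (by omega) (by omega) (by omega) (by omega)
        simp only [Matrix.of_apply, hfst, hsnd, mul_zero, zero_div, sub_zero]
      · have hsnd : B i.castSucc (Fin.last (m+3)) = 0 :=
          hsupp' i (m+3) (by omega) (by omega) (by omega) (by omega) (by omega)
        simp only [Matrix.of_apply, hfst, hsnd, zero_mul, zero_div, sub_zero]
    have T0 := IH a b (A.submatrix Fin.castSucc Fin.castSucc) _ hA0pd hC0pd s0.2 s0.1
      (fun i => hdiag i.castSucc)
      (fun i j hij => hsup i.castSucc j.castSucc (by simpa using hij))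
      hC0supp
    -- submatrix A1 (indices 1..m+3)
    have hd0 : B (0 : Fin (m+4)) (0 : Fin (m+4)) ≠ 0 := (diag_pos hBpd _).ne'
    have s1 := schur hBA hAB Fin.succ (0 : Fin (m+4)) (Fin.succ_injective _)
      (fun k => Fin.succ_ne_zero k) (fun g => by rw [Fin.sum_univ_succ]; ring) hd0
    have hA1pd := posDef_sub_succ hApd
    have hC1pd : (Matrix.of fun i j : Fin (m+3) => B i.succ j.succ -
        B i.succ (0 : Fin (m+4)) * B (0 : Fin (m+4)) j.succ
          / B (0 : Fin (m+4)) (0 : Fin (m+4))).PosDef := by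
      have h1 : (A.submatrix Fin.succ Fin.succ)⁻¹
          = Matrix.of fun i j : Fin (m+3) => B i.succ j.succ -
            B i.succ (0 : Fin (m+4)) * B (0 : Fin (m+4)) j.succ
              / B (0 : Fin (m+4)) (0 : Fin (m+4)) := Matrix.inv_eq_left_inv s1.1
      rw [← h1]
      exact hA1pd.inv
    have hC1supp : ∀ i j : Fin (m+3), ((i:ℕ)+1 < (j:ℕ) ∨ (j:ℕ)+1 < (i:ℕ)) →
        ¬((i:ℕ) = 0 ∧ (j:ℕ) = m+3-1) → ¬((j:ℕ) = 0 ∧ (i:ℕ) = m+3-1) →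
        (Matrix.of fun i j : Fin (m+3) => B i.succ j.succ -
          B i.succ (0 : Fin (m+4)) * B (0 : Fin (m+4)) j.succ
            / B (0 : Fin (m+4)) (0 : Fin (m+4))) i j = 0 := by
      intro i j hdist hc1 hc2
      have hi := i.isLt
      have hj := j.isLt
      have hc1' : ¬((i:ℕ) = 0 ∧ (j:ℕ) = m+2) := hc1
      have hc2' : ¬((j:ℕ) = 0 ∧ (i:ℕ) = m+2) := hc2
      have hfst : B i.succ j.succ = 0 :=
        hsupp' ((i:ℕ)+1) ((j:ℕ)+1) (by omega) (by omega) (by omega) (by omega) (by omega)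
      by_cases h0 : (i:ℕ) = 0 ∨ (i:ℕ) = m+2
      · have hjn : ¬((j:ℕ) = 0 ∨ (j:ℕ) = m+2) := by omega
        have hsnd : B (0 : Fin (m+4)) j.succ = 0 :=
          hsupp' 0 ((j:ℕ)+1) (by omega) (by omega) (by omega) (by omega) (by omega)
        simp only [Matrix.of_apply, hfst, hsnd, mul_zero, zero_div, sub_zero]
      · have hsnd : B i.succ (0 : Fin (m+4)) = 0 :=
          hsupp' ((i:ℕ)+1) 0 (by omega) (by omega) (by omega) (by omega) (by omega)
        simp only [Matrix.of_apply, hfst, hsnd, zero_mul, zero_div, sub_zero]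
    have T1 := IH a b (A.submatrix Fin.succ Fin.succ) _ hA1pd hC1pd s1.2 s1.1
      (fun i => hdiag i.succ)
      (fun i j hij => hsup i.succ j.succ (by simpa using hij))
      hC1supp
    -- transfer Toeplitz facts to value form
    have T0' : ∀ (p q p' q' : ℕ) (hp : p < m+3) (hq : q < m+3) (hp' : p' < m+3)
        (hq' : q' < m+3), (p:ℤ) - (q:ℤ) = (p':ℤ) - (q':ℤ) →
        A ⟨p, by omega⟩ ⟨q, by omega⟩ = A ⟨p', by omega⟩ ⟨q', by omega⟩ := by
      intro p q p' q' hp hq hp' hq' hdq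
      exact T0 ⟨p, hp⟩ ⟨q, hq⟩ ⟨p', hp'⟩ ⟨q', hq'⟩ hdq
    have T1' : ∀ (p q p' q' : ℕ) (hp : p < m+3) (hq : q < m+3) (hp' : p' < m+3)
        (hq' : q' < m+3), (p:ℤ) - (q:ℤ) = (p':ℤ) - (q':ℤ) →
        A ⟨p+1, by omega⟩ ⟨q+1, by omega⟩ = A ⟨p'+1, by omega⟩ ⟨q'+1, by omega⟩ := by
      intro p q p' q' hp hq hp' hq' hdq
      exact T1 ⟨p, hp⟩ ⟨q, hq⟩ ⟨p', hp'⟩ ⟨q', hq'⟩ hdq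
    have AC : ∀ (p q p' q' : ℕ) (hp : p < m+4) (hq : q < m+4) (hp' : p' < m+4)
        (hq' : q' < m+4), p = p' → q = q' →
        A ⟨p, hp⟩ ⟨q, hq⟩ = A ⟨p', hp'⟩ ⟨q', hq'⟩ := by
      intro p q p' q' hp hq hp' hq' h1 h2
      congr 1
      · exact Fin.ext h1
      · exact Fin.ext h2
    have pos_case : ∀ (p q p' q' : ℕ) (hp : p < m+4) (hq : q < m+4) (hp' : p' < m+4)
        (hq' : q' < m+4), q ≤ p → (p:ℤ) - (q:ℤ) = (p':ℤ) - (q':ℤ) →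
        A ⟨p, hp⟩ ⟨q, hq⟩ = A ⟨p', hp'⟩ ⟨q', hq'⟩ := by
      intro p q p' q' hp hq hp' hq' hqp hdq
      have hqp' : q' ≤ p' := by omega
      by_cases hk1 : p - q = m + 3
      · exact AC p q p' q' hp hq hp' hq' (by omega) (by omega)
      by_cases hk2 : p - q = m + 2
      · have hcan : ∀ (r s : ℕ) (hr : r < m+4) (hs : s < m+4), s ≤ r → r - s = m+2 →
            A ⟨r, hr⟩ ⟨s, hs⟩ = A ⟨m+3, by omega⟩ ⟨1, by omega⟩ := by
          intro r s hr hs hsr hk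
          rcases (by omega : (r = m+2 ∧ s = 0) ∨ (r = m+3 ∧ s = 1)) with ⟨h1, h2⟩ | ⟨h1, h2⟩
          · calc A ⟨r, hr⟩ ⟨s, hs⟩ = A ⟨m+2, by omega⟩ ⟨0, by omega⟩ :=
                AC r s (m+2) 0 hr hs (by omega) (by omega) h1 h2
              _ = A ⟨0, by omega⟩ ⟨m+2, by omega⟩ := hsymv (m+2) 0 (by omega) (by omega)
              _ = A ⟨m+3, by omega⟩ ⟨1, by omega⟩ := huw.symm
          · exact AC r s (m+3) 1 hr hs (by omega) (by omega) h1 h2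
        exact (hcan p q hp hq hqp hk2).trans (hcan p' q' hp' hq' hqp' (by omega)).symm
      · have hkle : p - q ≤ m + 1 := by omega
        have hbr : ∀ (r s : ℕ) (hr : r < m+4) (hs : s < m+4), s ≤ r → r - s = p - q →
            A ⟨r, hr⟩ ⟨s, hs⟩ = A ⟨(p-q)+1, by omega⟩ ⟨1, by omega⟩ := by
          intro r s hr hs hsr hk
          by_cases hs0 : s = 0
          · have := T0' r s ((p-q)+1) 1 (by omega) (by omega) (by omega) (by omega)
              (by omega)
            exact this
          · have h2 := T1' (r-1) (s-1) (p-q) 0 (by omega) (by omega) (by omega) (by omega)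
              (by omega)
            calc A ⟨r, hr⟩ ⟨s, hs⟩ = A ⟨(r-1)+1, by omega⟩ ⟨(s-1)+1, by omega⟩ :=
                AC r s ((r-1)+1) ((s-1)+1) hr hs (by omega) (by omega) (by omega) (by omega)
              _ = A ⟨(p-q)+1, by omega⟩ ⟨0+1, by omega⟩ := h2
              _ = A ⟨(p-q)+1, by omega⟩ ⟨1, by omega⟩ :=
                AC ((p-q)+1) (0+1) ((p-q)+1) 1 (by omega) (by omega) (by omega) (by omega)
                  rfl rfl
        exact (hbr p q hp hq hqp rfl).trans (hbr p' q' hp' hq' hqp' (by omega)).symm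
    intro i j i' j' h
    obtain ⟨p, hp⟩ := i; obtain ⟨q, hq⟩ := j
    obtain ⟨p', hp'⟩ := i'; obtain ⟨q', hq'⟩ := j'
    have h' : (p:ℤ) - (q:ℤ) = (p':ℤ) - (q':ℤ) := h
    by_cases hle : q ≤ p
    · exact pos_case p q p' q' hp hq hp' hq' hle h'
    · rw [hsymv p q hp hq, hsymv p' q' hp' hq']
      exact pos_case q p q' p' hq hp hq' hp' (by omega) (by omega)

end Stmt14Aux

open Stmt14Aux

theorem stmt14 {n : ℕ} (hn : 4 ≤ n) (a b c : ℝ)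
    (Completion : Matrix (Fin n) (Fin n) ℝ → Prop)
    (hCompletion : ∀ M, Completion M ↔ (M.IsSymm ∧ (∀ i, M i i = a) ∧
      (∀ i j : Fin n, (i : ℕ) + 1 = (j : ℕ) → M i j = b) ∧
      M ⟨0, by omega⟩ ⟨n - 1, by omega⟩ = c))
    (A : Matrix (Fin n) (Fin n) ℝ) (hA : Completion A) (hApd : A.PosDef)
    (hAmax : ∀ M, Completion M → M.PosDef → M.det ≤ A.det) :
    ∀ i j i' j' : Fin n, (i : ℤ) - (j : ℤ) = (i' : ℤ) - (j' : ℤ) → A i j = A i' j' := by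
  obtain ⟨hAsym, hdiagA, hsupA, hcorner⟩ := (hCompletion A).mp hA
  have hdet_unit : IsUnit A.det := hApd.det_pos.ne'.isUnit
  have hAB := Matrix.mul_nonsing_inv A hdet_unit
  have hBA := Matrix.nonsing_inv_mul A hdet_unit
  have hBpd : (A⁻¹).PosDef := hApd.inv
  have hEzero : ∀ (p q i j : Fin n), ¬(i = p ∧ j = q) → ¬(i = q ∧ j = p) →
      Epert p q i j = 0 := fun p q i j h1 h2 => Epert_zero p q i j h1 h2
  have hcomp : ∀ (p q : Fin n), (p:ℕ)+1 < (q:ℕ) → ¬((p:ℕ) = 0 ∧ (q:ℕ) = n-1) →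
      ∀ t : ℝ, (A + t • Epert p q).PosDef → (A + t • Epert p q).det ≤ A.det := by
    intro p q hlt hnc t hpd
    apply hAmax _ _ hpd
    rw [hCompletion]
    refine ⟨?_, ?_, ?_, ?_⟩
    · show (A + t • Epert p q)ᵀ = _
      rw [Matrix.transpose_add, Matrix.transpose_smul, hAsym]
      congr 1
      congr 1
      ext k l
      simp only [Matrix.transpose_apply, Epert, Matrix.of_apply]
      ring
    · intro i
      have hE : Epert p q i i = 0 := by
        refine hEzero p q i i ?_ ?_
        · rintro ⟨h1, h2⟩
          have e1 := congrArg Fin.val h1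
          have e2 := congrArg Fin.val h2
          omega
        · rintro ⟨h1, h2⟩
          have e1 := congrArg Fin.val h1
          have e2 := congrArg Fin.val h2
          omega
      rw [Matrix.add_apply, Matrix.smul_apply, hE, hdiagA i, smul_eq_mul, mul_zero, add_zero]
    · intro i j hij
      have hE : Epert p q i j = 0 := by
        refine hEzero p q i j ?_ ?_
        · rintro ⟨h1, h2⟩
          have e1 := congrArg Fin.val h1
          have e2 := congrArg Fin.val h2
          omega
        · rintro ⟨h1, h2⟩
          have e1 := congrArg Fin.val h1
          have e2 := congrArg Fin.val h2
          omega
      rw [Matrix.add_apply, Matrix.smul_apply, hE, hsupA i j hij, smul_eq_mul, mul_zero,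
        add_zero]
    · have hE : Epert p q ⟨0, by omega⟩ ⟨n - 1, by omega⟩ = 0 := by
        refine hEzero p q _ _ ?_ ?_
        · rintro ⟨h1, h2⟩
          have e1 := congrArg Fin.val h1
          have e2 := congrArg Fin.val h2
          simp only [Fin.val_mk] at e1 e2
          omega
        · rintro ⟨h1, h2⟩
          have e1 := congrArg Fin.val h1
          have e2 := congrArg Fin.val h2
          simp only [Fin.val_mk] at e1 e2
          omega
      rw [Matrix.add_apply, Matrix.smul_apply, hE, hcorner, smul_eq_mul, mul_zero, add_zero]
  have hsuppB : ∀ i j : Fin n, ((i:ℕ)+1 < (j:ℕ) ∨ (j:ℕ)+1 < (i:ℕ)) →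
      ¬((i:ℕ) = 0 ∧ (j:ℕ) = n-1) → ¬((j:ℕ) = 0 ∧ (i:ℕ) = n-1) → A⁻¹ i j = 0 := by
    intro i j hdist hc1 hc2
    rcases hdist with hlt | hlt
    · exact stationarity (by omega) hApd (Fin.ne_of_val_ne (by omega)) (hcomp i j hlt hc1)
    · rw [pd_symm hBpd j i]
      exact stationarity (by omega) hApd (Fin.ne_of_val_ne (by omega)) (hcomp j i hlt hc2)
  exact key n (by omega) a b A A⁻¹ hApd hBpd hAB hBA hdiagA hsupA hsuppB
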